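/- For every ε > 0 there exists N such that for all n ≥ N and all positive integers λ, there exists a bipartite covering H = {H_1, …, H_m} of the complete multigraph K_n^λ with cap(H) ≤ n·( log₂(n−1) + (1+ε)·λ·log₂ log₂ n ). -/

import Mathlib

open Finset Filter Real

/-- A nonzero polynomial given by coefficient vectors `v ≠ w` of length `k` agrees on at most
`k - 1` of the distinct evaluation points `α j`. -/
lemma rs_distance {F : Type*} [Field F] [DecidableEq F] {k D : ℕ}
    (α : Fin D ↪ F) {v w : Fin k → F} (hvw : v ≠ w) :
    (Finset.univ.filter fun j : Fin D =>
      (∑ i : Fin k, v i * α j ^ (i : ℕ)) = (∑ i : Fin k, w i * α j ^ (i : ℕ))).card ≤ k - 1 := by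
  classical
  set p : Polynomial F := ∑ i : Fin k, Polynomial.C (v i - w i) * Polynomial.X ^ (i : ℕ) with hp
  have hcoeff : ∀ i0 : Fin k, p.coeff (i0 : ℕ) = v i0 - w i0 := by
    intro i0
    rw [hp, Polynomial.finset_sum_coeff, Finset.sum_eq_single i0]
    · rw [Polynomial.coeff_C_mul, Polynomial.coeff_X_pow, if_pos rfl, mul_one]
    · intro b _ hb
      rw [Polynomial.coeff_C_mul, Polynomial.coeff_X_pow, if_neg (by
        simpa [Fin.val_inj, eq_comm] using hb), mul_zero]
    · simp
  have hpne : p ≠ 0 := by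
    obtain ⟨i0, hi0⟩ := Function.ne_iff.mp hvw
    intro h
    apply hi0
    have := hcoeff i0
    rw [h, Polynomial.coeff_zero] at this
    linear_combination -this
  have hdeg : p.natDegree ≤ k - 1 := by
    apply Polynomial.natDegree_sum_le_of_forall_le
    intro i _
    refine le_trans (Polynomial.natDegree_mul_le) ?_
    simp only [Polynomial.natDegree_C, Polynomial.natDegree_pow, Polynomial.natDegree_X,
      zero_add, mul_one]
    exact Nat.le_sub_one_of_lt i.isLt
  set S := (Finset.univ.filter fun j : Fin D =>
      (∑ i : Fin k, v i * α j ^ (i : ℕ)) = (∑ i : Fin k, w i * α j ^ (i : ℕ))) with hS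
  have hsub : S.image α ⊆ p.roots.toFinset := by
    intro a ha
    obtain ⟨j, hj, rfl⟩ := Finset.mem_image.mp ha
    rw [Multiset.mem_toFinset, Polynomial.mem_roots hpne]
    have hj' := (Finset.mem_filter.mp hj).2
    unfold Polynomial.IsRoot
    rw [hp]
    rw [Polynomial.eval_finset_sum]
    simp only [Polynomial.eval_mul, Polynomial.eval_C, Polynomial.eval_pow, Polynomial.eval_X]
    have : ∑ i : Fin k, (v i - w i) * α j ^ (i : ℕ)
        = (∑ i : Fin k, v i * α j ^ (i : ℕ)) - (∑ i : Fin k, w i * α j ^ (i : ℕ)) := by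
      rw [← Finset.sum_sub_distrib]; congr 1; ext i; ring
    rw [this, hj', sub_self]
  calc S.card = (S.image α).card := (Finset.card_image_of_injective _ α.injective).symm
    _ ≤ p.roots.toFinset.card := Finset.card_le_card hsub
    _ ≤ Multiset.card p.roots := p.roots.toFinset_card_le
    _ ≤ p.natDegree := p.card_roots'
    _ ≤ k - 1 := hdeg

/-- Two distinct naturals below `2 ^ t` differ at some bit below `t`. -/
lemma bits_differ {t x y : ℕ} (hx : x < 2 ^ t) (hy : y < 2 ^ t) (hxy : x ≠ y) :
    ∃ b : ℕ, b < t ∧ x.testBit b ≠ y.testBit b := by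
  by_contra h
  push_neg at h
  refine hxy (Nat.eq_of_testBit_eq fun b => ?_)
  by_cases hb : b < t
  · exact h b hb
  · rw [Nat.testBit_eq_false_of_lt (lt_of_lt_of_le hx
      (Nat.pow_le_pow_right (by norm_num) (le_of_not_gt hb))),
      Nat.testBit_eq_false_of_lt (lt_of_lt_of_le hy
      (Nat.pow_le_pow_right (by norm_num) (le_of_not_gt hb)))]

/-- Ceiling division times divisor is at least the numerator. -/
lemma le_ceil_div_mul (a t : ℕ) (ha : 1 ≤ a) (ht : 0 < t) : a ≤ ((a + t - 1) / t) * t := by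
  have h1 : a + t - 1 = (a - 1) + t := by omega
  have h2 : (a + t - 1) / t = (a - 1) / t + 1 := by rw [h1, Nat.add_div_right _ ht]
  have h3 : a - 1 < t * ((a - 1) / t + 1) := Nat.lt_mul_div_succ _ ht
  rw [h2, mul_comm]
  omega

set_option maxHeartbeats 1000000 in
/-- The Reed–Solomon based construction, purely combinatorial part. -/
lemma cover_nat (n lam k D t r : ℕ) (ht : 0 < t) (hk : 1 ≤ k) (hr : 0 < r)
    (hn : n ≤ 2 ^ (t * k)) (hD : D ≤ 2 ^ t) (hlam : lam ≤ (D - (k - 1)) * r) :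
    ∃ (A B : Fin (D * t * r) → Finset (Fin n)),
      (∀ i, Disjoint (A i) (B i)) ∧
      (∀ x y : Fin n, x ≠ y →
        lam ≤ (Finset.univ.filter
          (fun i => (x ∈ A i ∧ y ∈ B i) ∨ (x ∈ B i ∧ y ∈ A i))).card) ∧
      (∀ i, A i ∪ B i = Finset.univ) := by
  classical
  haveI : Fact (Nat.Prime 2) := ⟨Nat.prime_two⟩
  set F := GaloisField 2 t with hFdef
  haveI : Fintype F := Fintype.ofFinite F
  have hFcard : Fintype.card F = 2 ^ t := by
    rw [← Nat.card_eq_fintype_card]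
    exact GaloisField.card 2 t (by omega)
  have hcard1 : Fintype.card (Fin n) ≤ Fintype.card (Fin k → F) := by
    rw [Fintype.card_fin, Fintype.card_fun, hFcard, Fintype.card_fin, ← pow_mul]
    exact hn
  obtain ⟨ι⟩ := Function.Embedding.nonempty_of_card_le hcard1
  have hcard2 : Fintype.card (Fin D) ≤ Fintype.card F := by
    rw [Fintype.card_fin, hFcard]; exact hD
  obtain ⟨α⟩ := Function.Embedding.nonempty_of_card_le hcard2
  set β : F ≃ Fin (2 ^ t) := Fintype.equivFinOfCardEq hFcard with hβdef
  set valNat : Fin n → Fin D → ℕ :=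
    fun x j => ((β (∑ i : Fin k, ι x i * α j ^ (i : ℕ))) : ℕ) with hvalNat
  have hvalLt : ∀ x j, valNat x j < 2 ^ t := fun x j => (β _).isLt
  have hcard3 : Fintype.card (Fin D × Fin t × Fin r) = D * t * r := by
    simp [Fintype.card_prod, Fintype.card_fin, mul_assoc]
  set e : Fin (D * t * r) ≃ Fin D × Fin t × Fin r :=
    (Fintype.equivFinOfCardEq hcard3).symm with hedef
  set A : Fin (D * t * r) → Finset (Fin n) := fun i =>
    Finset.univ.filter fun x => (valNat x (e i).1).testBit ((e i).2.1 : ℕ) = false with hA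
  set B : Fin (D * t * r) → Finset (Fin n) := fun i =>
    Finset.univ.filter fun x => (valNat x (e i).1).testBit ((e i).2.1 : ℕ) = true with hB
  refine ⟨A, B, ?_, ?_, ?_⟩
  · intro i
    rw [Finset.disjoint_left]
    intro a ha hb
    rw [hA, Finset.mem_filter] at ha
    rw [hB, Finset.mem_filter] at hb
    rw [ha.2] at hb
    exact Bool.false_ne_true hb.2
  · intro x y hxy
    have hι : ι x ≠ ι y := fun h => hxy (ι.injective h)
    set S : Finset (Fin D) := Finset.univ.filter (fun j =>
      (∑ i : Fin k, ι x i * α j ^ (i : ℕ)) = (∑ i : Fin k, ι y i * α j ^ (i : ℕ))) with hSdef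
    set T : Finset (Fin D) := Sᶜ with hTdef
    have hScard : S.card ≤ k - 1 := rs_distance α hι
    have hTcard : D - (k - 1) ≤ T.card := by
      have h1 : T.card = D - S.card := by
        rw [hTdef, Finset.card_compl, Fintype.card_fin]
      omega
    have hvdiff : ∀ j ∈ T, valNat x j ≠ valNat y j := by
      intro j hj
      rw [hTdef, Finset.mem_compl, hSdef, Finset.mem_filter] at hj
      intro h
      exact hj ⟨Finset.mem_univ j, β.injective (Fin.val_injective h)⟩
    have hbex : ∀ j : Fin D, ∃ b : Fin t, j ∈ T →
        (valNat x j).testBit (b : ℕ) ≠ (valNat y j).testBit (b : ℕ) := by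
      intro j
      by_cases hj : j ∈ T
      · obtain ⟨b, hb, hne⟩ := bits_differ (hvalLt x j) (hvalLt y j) (hvdiff j hj)
        exact ⟨⟨b, hb⟩, fun _ => hne⟩
      · exact ⟨⟨0, by omega⟩, fun h => absurd h hj⟩
    choose bfun hbfun using hbex
    set g : Fin D × Fin r → Fin (D * t * r) := fun jr => e.symm (jr.1, bfun jr.1, jr.2) with hg
    have hginj : Function.Injective g := by
      intro a b hab
      have := e.symm.injective hab
      rw [Prod.mk.injEq, Prod.mk.injEq] at this
      exact Prod.ext this.1 this.2.2
    have hmaps : ∀ a ∈ T ×ˢ (Finset.univ : Finset (Fin r)), g a ∈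
        Finset.univ.filter (fun i => (x ∈ A i ∧ y ∈ B i) ∨ (x ∈ B i ∧ y ∈ A i)) := by
      rintro ⟨j, s⟩ ha
      rw [Finset.mem_product] at ha
      have hjT : j ∈ T := ha.1
      have hei : e (g ⟨j, s⟩) = (j, bfun j, s) := by
        rw [hg]; exact e.apply_symm_apply _
      have hne := hbfun j hjT
      rw [Finset.mem_filter]
      refine ⟨Finset.mem_univ _, ?_⟩
      have hxA : ∀ z : Fin n, (z ∈ A (g ⟨j, s⟩) ↔ (valNat z j).testBit (bfun j : ℕ) = false) := by
        intro z
        rw [hA]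
        simp only [Finset.mem_filter, Finset.mem_univ, true_and, hei]
      have hxB : ∀ z : Fin n, (z ∈ B (g ⟨j, s⟩) ↔ (valNat z j).testBit (bfun j : ℕ) = true) := by
        intro z
        rw [hB]
        simp only [Finset.mem_filter, Finset.mem_univ, true_and, hei]
      cases hbx : (valNat x j).testBit (bfun j : ℕ) with
      | false =>
        left
        refine ⟨(hxA x).mpr hbx, (hxB y).mpr ?_⟩
        rw [hbx] at hne
        exact (Bool.not_eq_false _).mp (Ne.symm hne)
      | true =>
        right
        refine ⟨(hxB x).mpr hbx, (hxA y).mpr ?_⟩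
        rw [hbx] at hne
        exact (Bool.not_eq_true _).mp (Ne.symm hne)
    have hcardle := Finset.card_le_card_of_injOn g hmaps (hginj.injOn)
    rw [Finset.card_product, Finset.card_univ, Fintype.card_fin] at hcardle
    calc lam ≤ (D - (k - 1)) * r := hlam
      _ ≤ T.card * r := Nat.mul_le_mul_right r hTcard
      _ ≤ _ := hcardle
  · intro i
    rw [Finset.eq_univ_iff_forall]
    intro z
    rw [Finset.mem_union, hA, hB]
    simp only [Finset.mem_filter, Finset.mem_univ, true_and]
    rcases Bool.dichotomy ((valNat z (e i).1).testBit ((e i).2.1 : ℕ)) with h | h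
    · exact Or.inl h
    · exact Or.inr h

/- STATEMENT 3 (upper bound: existence of coverings of `K_n^λ` of small capacity).
A bipartite covering of the complete multigraph `K_n^λ` is a finite family of bipartite
graphs given by pairs of disjoint bipartition classes `(A i, B i)` such that every pair
of distinct vertices is separated by at least `λ` of the pairs.  The capacity is
`∑ i, |A i ∪ B i|`. -/
set_option maxHeartbeats 1600000 in
theorem multigraph_cover_upper_bound (ε : ℝ) (hε : 0 < ε) :
    ∃ N : ℕ, ∀ n : ℕ, N ≤ n → ∀ lam : ℕ, 1 ≤ lam →
      ∃ (m : ℕ) (A B : Fin m → Finset (Fin n)),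
        (∀ i, Disjoint (A i) (B i)) ∧
        (∀ x y : Fin n, x ≠ y →
          lam ≤ (Finset.univ.filter
            (fun i => (x ∈ A i ∧ y ∈ B i) ∨ (x ∈ B i ∧ y ∈ A i))).card) ∧
        (∑ i, ((A i ∪ B i).card : ℝ)) ≤
          (n : ℝ) * (Real.logb 2 ((n : ℝ) - 1)
            + (1 + ε) * (lam : ℝ) * Real.logb 2 (Real.logb 2 n)) := by
  classical
  set δ : ℝ := ε / (4 + 2 * ε) with hδdef
  have hδpos : 0 < δ := by positivity
  have hδ1 : δ ≤ 1 := by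
    rw [hδdef, div_le_one (by linarith)]; linarith
  set M : ℝ := 2 + 4 / δ with hMdef
  have hM2 : 2 ≤ M := by
    have : 0 ≤ 4 / δ := by positivity
    rw [hMdef]; linarith
  clear_value δ M
  -- choose N so that the logs are large enough
  have hLtend : Tendsto (fun n : ℕ => Real.logb 2 (n : ℝ)) atTop atTop :=
    (Real.tendsto_logb_atTop (by norm_num : (1:ℝ) < 2)).comp tendsto_natCast_atTop_atTop
  have hLLtend : Tendsto (fun n : ℕ => Real.logb 2 (Real.logb 2 (n : ℝ))) atTop atTop :=
    (Real.tendsto_logb_atTop (by norm_num : (1:ℝ) < 2)).comp hLtend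
  have hev : ∀ᶠ n : ℕ in atTop, 2 ≤ n ∧ 8 / ε ≤ Real.logb 2 (Real.logb 2 (n : ℝ))
      ∧ max 1 (M ^ (2 / ε)) ≤ Real.logb 2 (n : ℝ) :=
    (eventually_ge_atTop 2).and ((hLLtend.eventually_ge_atTop _).and
      (hLtend.eventually_ge_atTop _))
  obtain ⟨N, hN⟩ := eventually_atTop.mp hev
  refine ⟨N, fun n hn lam hlam => ?_⟩
  obtain ⟨hn2, hLL8, hLM⟩ := hN n hn
  set L : ℝ := Real.logb 2 (n : ℝ) with hLdef
  set LL : ℝ := Real.logb 2 L with hLLdef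
  have hL1 : 1 ≤ L := le_trans (le_max_left _ _) hLM
  have hLpos : 0 < L := by linarith
  have hLLpos : 0 < LL := lt_of_lt_of_le (by positivity) hLL8
  -- parameters
  set t : ℕ := ⌈(1 + ε / 2) * LL⌉₊ with htdef
  have ht_lb : (1 + ε / 2) * LL ≤ (t : ℝ) := Nat.le_ceil _
  have ht_ub : (t : ℝ) ≤ (1 + ε / 2) * LL + 1 :=
    (Nat.ceil_lt_add_one (by positivity)).le
  have ht1 : 1 ≤ t := by
    rw [htdef]
    exact Nat.one_le_iff_ne_zero.mpr (by
      intro h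
      have := Nat.ceil_eq_zero.mp h
      nlinarith)
  have htpos : (0:ℝ) < t := by exact_mod_cast ht1
  clear_value t
  set c : ℕ := Nat.clog 2 n with hcdef
  have hc1 : 1 ≤ c := Nat.clog_pos (by norm_num) hn2
  have hn_le : (n : ℝ) ≤ (2 : ℝ) ^ (c : ℕ) := by exact_mod_cast Nat.le_pow_clog (by norm_num) n
  have hc_lb : L ≤ (c : ℝ) := by
    have h2 : Real.logb 2 ((2:ℝ) ^ (c:ℕ)) = c := by
      rw [Real.logb_pow]
      simp [Real.logb_self_eq_one]
    calc L ≤ Real.logb 2 ((2:ℝ) ^ (c:ℕ)) :=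
          Real.logb_le_logb_of_le (by norm_num)
            (show (0:ℝ) < n by exact_mod_cast (by omega : 0 < n)) hn_le
      _ = c := h2
  have hpow_lt : (2 : ℕ) ^ (c - 1) < n := Nat.pow_pred_clog_lt_self (by norm_num) hn2
  have hnc : n ≤ 2 ^ c := Nat.le_pow_clog (by norm_num) n
  clear_value c
  have hc_ub : (c : ℝ) - 1 ≤ Real.logb 2 ((n : ℝ) - 1) := by
    have h1 : ((2:ℝ) ^ (c - 1 : ℕ)) ≤ (n : ℝ) - 1 := by
      have : ((2:ℕ) ^ (c-1) : ℝ) ≤ (n : ℝ) - 1 := by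
        have : (2:ℕ) ^ (c-1) + 1 ≤ n := hpow_lt
        have := (Nat.cast_le (α := ℝ)).mpr this
        push_cast at this ⊢
        linarith
      exact_mod_cast this
    have h2 : ((c : ℝ) - 1) = Real.logb 2 ((2:ℝ) ^ (c - 1 : ℕ)) := by
      rw [Real.logb_pow]
      have : ((c - 1 : ℕ) : ℝ) = (c : ℝ) - 1 := by
        have := hc1; push_cast [Nat.cast_sub hc1]; ring
      simp [Real.logb_self_eq_one, this]
    rw [h2]
    exact Real.logb_le_logb_of_le (by norm_num) (by positivity) h1
  have hlognm1 : 0 ≤ Real.logb 2 ((n:ℝ) - 1) := by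
    apply Real.logb_nonneg (by norm_num)
    have : (2:ℝ) ≤ n := by exact_mod_cast hn2
    linarith
  have hc_ub2 : (c : ℝ) ≤ L + 1 := by
    have h2n : (2:ℝ) ≤ n := by exact_mod_cast hn2
    have h3 : Real.logb 2 ((n:ℝ) - 1) ≤ L :=
      Real.logb_le_logb_of_le (by norm_num) (by linarith) (by linarith)
    linarith
  set k : ℕ := (c + t - 1) / t with hkdef
  have hk1 : 1 ≤ k := (Nat.one_le_div_iff (by omega)).mpr (by omega)
  have hkt_le : k * t ≤ c + t - 1 := Nat.div_mul_le_self _ _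
  have hkt_ge : c ≤ k * t := by
    rw [hkdef]; exact le_ceil_div_mul c t (by omega) (by omega)
  have hk_le_c : k ≤ c := by
    rw [hkdef, Nat.div_le_iff_le_mul_add_pred (by omega)]
    have : c ≤ t * c := Nat.le_mul_of_pos_left c (by omega)
    omega
  clear_value k
  set q : ℕ := 2 ^ t with hqdef
  clear_value q
  -- q is large : L * M ≤ q
  have hq_lb : L ^ (1 + ε / 2) ≤ (q : ℝ) := by
    have h1 : (q : ℝ) = (2 : ℝ) ^ ((t : ℕ) : ℝ) := by
      rw [hqdef]; push_cast [Real.rpow_natCast]; norm_num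
    have h2 : (2:ℝ) ^ (LL * (1 + ε/2)) ≤ (2:ℝ) ^ ((t:ℕ) : ℝ) :=
      Real.rpow_le_rpow_of_exponent_le (by norm_num) (by rw [mul_comm]; exact ht_lb)
    have h3 : (2:ℝ) ^ (LL * (1 + ε/2)) = ((2:ℝ) ^ LL) ^ (1 + ε/2) :=
      Real.rpow_mul (by norm_num) _ _
    have h4 : (2:ℝ) ^ LL = L := Real.rpow_logb (by norm_num) (by norm_num) hLpos
    rw [h1]
    rw [h3, h4] at h2
    exact h2
  have hLM' : M ≤ L ^ (ε / 2) := by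
    have h0 : M ^ (2/ε) ≤ L := le_trans (le_max_right _ _) hLM
    have h1 : (M ^ (2/ε)) ^ (ε/2) ≤ L ^ (ε/2) :=
      Real.rpow_le_rpow (by positivity) h0 (by positivity)
    rwa [← Real.rpow_mul (by linarith : (0:ℝ) ≤ M), div_mul_div_comm,
      show (2:ℝ) * ε / (ε * 2) = 1 by field_simp, Real.rpow_one] at h1
  have hLMq : L * M ≤ (q : ℝ) := by
    have h1 : L ^ (1 + ε/2) = L * L ^ (ε/2) := by
      rw [Real.rpow_add hLpos, Real.rpow_one]
    have h2 : L * M ≤ L * L ^ (ε/2) := mul_le_mul_of_nonneg_left hLM' hLpos.le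
    calc L * M ≤ L * L ^ (ε/2) := h2
      _ = L ^ (1 + ε/2) := h1.symm
      _ ≤ (q : ℝ) := hq_lb
  have hkq : k ≤ q := by
    have h1 : (k : ℝ) ≤ (q : ℝ) := by
      have : (k:ℝ) ≤ c := by exact_mod_cast hk_le_c
      nlinarith
    exact_mod_cast h1
  set Q : ℕ := q - k + 1 with hQdef
  have hQ1 : 1 ≤ Q := by omega
  have hQcast : (Q : ℝ) = (q : ℝ) - k + 1 := by
    rw [hQdef]; push_cast [Nat.cast_sub hkq]; ring
  have hQpos : (0:ℝ) < Q := by exact_mod_cast hQ1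
  clear_value Q
  -- key largeness : 2 k ≤ δ Q
  have hQδ : 2 * (k : ℝ) ≤ δ * Q := by
    have hkL : (k : ℝ) ≤ L + 1 := by
      have : (k:ℝ) ≤ c := by exact_mod_cast hk_le_c
      linarith
    have h1 : (Q : ℝ) ≥ L * M - L := by
      rw [hQcast]; linarith
    have h2 : δ * (L * M - L) = δ * L + 4 * L := by
      rw [hMdef]; field_simp; ring
    have h3 : δ * (L * M - L) ≤ δ * Q := mul_le_mul_of_nonneg_left h1 hδpos.le
    have h4 : 0 ≤ δ * L := mul_nonneg hδpos.le hLpos.le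
    linarith
  clear_value L LL
  set r : ℕ := (lam + Q - 1) / Q with hrdef
  have hr1 : 1 ≤ r := (Nat.one_le_div_iff (by omega)).mpr (by omega)
  have hrQ_le : r * Q ≤ lam + Q - 1 := Nat.div_mul_le_self _ _
  have hrQ_ge : lam ≤ r * Q := by
    rw [hrdef]; exact le_ceil_div_mul lam Q (by omega) (by omega)
  clear_value r
  set u : ℕ := (lam + r - 1) / r with hudef
  have hu1 : 1 ≤ u := (Nat.one_le_div_iff (by omega)).mpr (by omega)
  have hur_le : u * r ≤ lam + r - 1 := Nat.div_mul_le_self _ _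
  have hur_ge : lam ≤ u * r := by
    rw [hudef]; exact le_ceil_div_mul lam r (by omega) (by omega)
  have hu_le_Q : u ≤ Q := by
    rw [hudef, Nat.div_le_iff_le_mul_add_pred (by omega)]
    have : lam ≤ r * Q := hrQ_ge
    omega
  clear_value u
  set D : ℕ := k - 1 + u with hDdef
  have hD1 : 1 ≤ D := by omega
  have hD_le_q : D ≤ q := by omega
  clear_value D
  set m : ℕ := D * t * r with hmdef
  have hn' : n ≤ 2 ^ (t * k) := le_trans hnc
    (Nat.pow_le_pow_right (by norm_num) (by rw [Nat.mul_comm]; exact hkt_ge))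
  have hD_le_q' : D ≤ 2 ^ t := by rw [hqdef] at hD_le_q; exact hD_le_q
  have hDk : D - (k - 1) = u := by omega
  have hlam' : lam ≤ (D - (k - 1)) * r := by rw [hDk]; exact hur_ge
  obtain ⟨A, B, hdisj, hsep, hAB⟩ :=
    cover_nat n lam k D t r (by omega) hk1 (by omega) hn' hD_le_q' hlam'
  refine ⟨m, A, B, hdisj, hsep, ?_⟩
  have hsum : (∑ i : Fin (D * t * r), ((A i ∪ B i).card : ℝ)) = (m : ℝ) * n := by
    rw [Finset.sum_congr rfl fun i _ => by rw [hAB i, Finset.card_univ, Fintype.card_fin]]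
    rw [Finset.sum_const, Finset.card_univ, Fintype.card_fin, nsmul_eq_mul, hmdef]
  rw [hsum]
  have hnpos : (0:ℝ) < n := by exact_mod_cast (by omega : 0 < n)
  rw [mul_comm (m:ℝ) (n:ℝ)]
  apply mul_le_mul_of_nonneg_left _ hnpos.le
  clear hsum hdisj hsep hAB hev hN hLtend hLLtend
  clear A B
  -- main arithmetic : m ≤ logb 2 (n-1) + (1+ε) lam LL
  have hmcast : (m : ℝ) = ((k : ℝ) - 1 + u) * t * r := by
    rw [hmdef, hDdef]
    push_cast [Nat.cast_sub hk1]
    ring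
  have hur_le' : (u : ℝ) * r ≤ (lam : ℝ) + r - 1 := by
    have : ((u * r : ℕ) : ℝ) ≤ ((lam + r - 1 : ℕ) : ℝ) := by exact_mod_cast hur_le
    push_cast [Nat.cast_sub (by omega : 1 ≤ lam + r)] at this
    linarith
  have hkt_le' : (k : ℝ) * t ≤ (c : ℝ) + t - 1 := by
    have : ((k * t : ℕ) : ℝ) ≤ ((c + t - 1 : ℕ) : ℝ) := by exact_mod_cast hkt_le
    push_cast [Nat.cast_sub (by omega : 1 ≤ c + t)] at this
    linarith
  have hlam1 : (1:ℝ) ≤ lam := by exact_mod_cast hlam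
  have hrpos : (0:ℝ) < r := by exact_mod_cast hr1
  have hεne : ε ≠ 0 := ne_of_gt hε
  have hLL2 : (ε / 2) * LL ≥ 4 := by
    have h1 : (ε/2) * (8/ε) = 4 := by field_simp; ring
    nlinarith [mul_le_mul_of_nonneg_left hLL8 (le_of_lt (half_pos hε))]
  by_cases hr : r = 1
  · -- single round
    have hrR : (r:ℝ) = 1 := by rw [hr]; norm_num
    have hu_lam : (u : ℝ) ≤ lam := by
      rw [hrR] at hur_le'
      linarith
    have hm1 : (m : ℝ) ≤ ((k:ℝ) - 1 + lam) * t := by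
      rw [hmcast, hrR, mul_one]
      exact mul_le_mul_of_nonneg_right (by linarith) htpos.le
    have hm2 : ((k:ℝ) - 1 + lam) * t = (k:ℝ)*t + ((lam:ℝ) - 1)*t := by ring
    have hm3 : (m:ℝ) ≤ ((c:ℝ) - 1) + (lam:ℝ)*t := by
      rw [hm2] at hm1
      nlinarith [hkt_le']
    have ht_final : (lam:ℝ) * t ≤ (1 + ε) * lam * LL := by
      have h1 : (t:ℝ) ≤ (1 + ε/2)*LL + 1 := ht_ub
      have h2 : (1 + ε/2)*LL + 1 ≤ (1+ε)*LL := by linarith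
      have h3 : (lam:ℝ) * t ≤ (lam:ℝ) * ((1+ε)*LL) :=
        mul_le_mul_of_nonneg_left (h1.trans h2) (by linarith)
      linarith [h3]
    calc (m:ℝ) ≤ ((c:ℝ) - 1) + (lam:ℝ)*t := hm3
      _ ≤ Real.logb 2 ((n:ℝ)-1) + (1+ε)*lam*LL := by linarith [hc_ub]
  · -- many rounds
    have hr2 : 2 ≤ r := by omega
    have hlamQ : Q + 1 ≤ lam := by
      have h1 : 2 * Q ≤ r * Q := Nat.mul_le_mul_right Q hr2
      omega
    have hrQ2 : (r : ℝ) * Q ≤ 2 * lam := by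
      have h1 : ((r * Q : ℕ) : ℝ) ≤ ((lam + Q - 1 : ℕ) : ℝ) := by exact_mod_cast hrQ_le
      have h2 : ((Q:ℝ)) + 1 ≤ lam := by exact_mod_cast hlamQ
      push_cast [Nat.cast_sub (by omega : 1 ≤ lam + Q)] at h1
      linarith
    have hrk : (r:ℝ) * k ≤ (lam:ℝ) * δ := by
      have h1 : ((r:ℝ) * Q) * (2 * k) ≤ (2 * lam) * (δ * Q) := by
        apply mul_le_mul hrQ2 hQδ (by positivity) (by positivity)
      have h2 : (0:ℝ) < Q := hQpos
      nlinarith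
    have hm1 : (m:ℝ) ≤ (t:ℝ)*lam + (t:ℝ)*(r*k) := by
      rw [hmcast]
      have hk0 : (1:ℝ) ≤ k := by exact_mod_cast hk1
      have hint : (t:ℝ)*(u*r) ≤ (t:ℝ)*((lam:ℝ) + r - 1) :=
        mul_le_mul_of_nonneg_left hur_le' htpos.le
      nlinarith [hint, htpos.le, hrpos.le]
    have hm2 : (m:ℝ) ≤ (t:ℝ)*lam*(1 + δ) := by
      have h5 : (t:ℝ)*(r*k) ≤ (t:ℝ)*(lam*δ) := mul_le_mul_of_nonneg_left hrk htpos.le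
      linarith
    have hfinal : (t:ℝ)*lam*(1+δ) ≤ (1+ε)*lam*LL := by
      have h1 : (t:ℝ) ≤ (1+ε/2)*LL + 1 := ht_ub
      have h2 : (1+δ)*(1+ε/2) = 1 + 3*ε/4 := by
        rw [hδdef]; field_simp; ring
      have h2L : (1+δ)*(1+ε/2)*LL = (1+3*ε/4)*LL := by rw [h2]
      have h3 : (1:ℝ) + δ ≤ (ε/4)*LL := by linarith [hLL2, hδ1]
      have hδ0 : (0:ℝ) ≤ 1 + δ := by linarith
      have hint : (t:ℝ)*(1+δ) ≤ ((1+ε/2)*LL + 1)*(1+δ) :=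
        mul_le_mul_of_nonneg_right h1 hδ0
      have s1 : (t:ℝ)*(1+δ) ≤ (1+ε)*LL := by linarith [hint, h2L, h3]
      have s2 : (lam:ℝ)*((t:ℝ)*(1+δ)) ≤ (lam:ℝ)*((1+ε)*LL) :=
        mul_le_mul_of_nonneg_left s1 (by linarith)
      linarith [s2]
    calc (m:ℝ) ≤ (t:ℝ)*lam*(1+δ) := hm2
      _ ≤ (1+ε)*lam*LL := hfinal
      _ ≤ Real.logb 2 ((n:ℝ)-1) + (1+ε)*lam*LL := by linarith
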